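/- Let $n\ge 2$, $\kappa>2$, $M>2$, $0<\alpha<2$, and set $a=\frac{M(n+2\kappa-2)}{\alpha}$, $b=\frac{M(n+2\kappa)}{\alpha}$, $\psi(t)=\frac{\kappa e^{at^{\alpha}}(1-bt^{\alpha})}{t^{n+2\kappa-1}}$. Then there exists $t_0=t_0(n,\alpha,\kappa,M)>0$ such that for all $0<t<t_0$, $-\frac{e^{at^{\alpha}}}{t^{n+2\kappa-2}}\Big(\kappa^2 e^{at^{\alpha}} t^{-n-2\kappa}+\psi'(t)+(n-1)\frac{\psi(t)}{t}\Big)-\psi(t)^2 \ge 0$. In fact, this inequality is equivalent to $2\alpha^2 - M(n+2\kappa)\big[(n+2\kappa)(\kappa-\alpha)+2\alpha\big]t^{\alpha} \ge 0$. -/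

import Mathlib

/-- With `a = M(n+2κ-2)/α`, `b = M(n+2κ)/α` and
`ψ(t) = κ e^{a t^α}(1 - b t^α)/t^{n+2κ-1}`, there is `t₀ = t₀(n,α,κ,M) > 0` such that
`-(e^{a t^α}/t^{n+2κ-2})(κ² e^{a t^α} t^{-n-2κ} + ψ'(t) + (n-1)ψ(t)/t) - ψ(t)² ≥ 0`
for `0 < t < t₀`; moreover for every `t > 0` this inequality is equivalent to
`2α² - M(n+2κ)[(n+2κ)(κ-α)+2α] t^α ≥ 0`. -/
theorem weiss_weight_differential_inequality
    (n : ℕ) (hn : 2 ≤ n) (κ M α : ℝ) (hκ : 2 < κ) (hM : 2 < M) (hα0 : 0 < α) (hα2 : α < 2)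
    (a b : ℝ) (ha : a = M * (n + 2 * κ - 2) / α) (hb : b = M * (n + 2 * κ) / α)
    (ψ : ℝ → ℝ)
    (hψ : ∀ t > (0:ℝ), ψ t = κ * Real.exp (a * t ^ α) * (1 - b * t ^ α) / t ^ (n + 2 * κ - 1)) :
    (∃ t₀ > (0:ℝ), ∀ t, 0 < t → t < t₀ →
      0 ≤ -(Real.exp (a * t ^ α) / t ^ (n + 2 * κ - 2)) *
            (κ ^ 2 * Real.exp (a * t ^ α) * t ^ (-(n:ℝ) - 2 * κ) + deriv ψ t +
              (n - 1) * ψ t / t) - ψ t ^ 2) ∧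
    (∀ t > (0:ℝ),
      (0 ≤ -(Real.exp (a * t ^ α) / t ^ (n + 2 * κ - 2)) *
            (κ ^ 2 * Real.exp (a * t ^ α) * t ^ (-(n:ℝ) - 2 * κ) + deriv ψ t +
              (n - 1) * ψ t / t) - ψ t ^ 2) ↔
      0 ≤ 2 * α ^ 2 - M * (n + 2 * κ) * ((n + 2 * κ) * (κ - α) + 2 * α) * t ^ α) := by
  have hn2 : (2:ℝ) ≤ (n:ℝ) := by exact_mod_cast hn
  have hq0 : (0:ℝ) < (n:ℝ) + 2 * κ := by linarith
  have hκ0 : (0:ℝ) < κ := by linarith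
  have hM0 : (0:ℝ) < M := by linarith
  have hαne : α ≠ 0 := hα0.ne'
  -- key identity
  have key : ∀ t, 0 < t →
      -(Real.exp (a * t ^ α) / t ^ ((n:ℝ) + 2 * κ - 2)) *
            (κ ^ 2 * Real.exp (a * t ^ α) * t ^ (-(n:ℝ) - 2 * κ) + deriv ψ t +
              ((n:ℝ) - 1) * ψ t / t) - ψ t ^ 2
      = (κ * M / α ^ 2 * (Real.exp (a * t ^ α)) ^ 2 * t ^ α * t ^ 2
          / (t ^ ((n:ℝ) + 2 * κ)) ^ 2)
        * (2 * α ^ 2 - M * ((n:ℝ) + 2 * κ) * (((n:ℝ) + 2 * κ) * (κ - α) + 2 * α) * t ^ α) := by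
    intro t ht
    have htne : t ≠ 0 := ht.ne'
    have hu : (0:ℝ) < t ^ α := Real.rpow_pos_of_pos ht α
    have hP : (0:ℝ) < t ^ ((n:ℝ) + 2 * κ) := Real.rpow_pos_of_pos ht _
    have hE : (0:ℝ) < Real.exp (a * t ^ α) := Real.exp_pos _
    have e1 : t ^ ((n:ℝ) + 2 * κ - 2) = t ^ ((n:ℝ) + 2 * κ) / t ^ 2 := by
      rw [Real.rpow_sub ht, show (2:ℝ) = ((2:ℕ):ℝ) by norm_num, Real.rpow_natCast]
    have e2 : t ^ (-(n:ℝ) - 2 * κ) = (t ^ ((n:ℝ) + 2 * κ))⁻¹ := by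
      rw [show -(n:ℝ) - 2 * κ = -((n:ℝ) + 2 * κ) by ring, Real.rpow_neg ht.le]
    have e3 : t ^ ((n:ℝ) + 2 * κ - 1) = t ^ ((n:ℝ) + 2 * κ) / t := by
      rw [Real.rpow_sub ht, Real.rpow_one]
    have e4 : t ^ (α - 1) = t ^ α / t := by
      rw [Real.rpow_sub ht, Real.rpow_one]
    have hψt : ψ t = κ * Real.exp (a * t ^ α) * (1 - b * t ^ α) * t / t ^ ((n:ℝ) + 2 * κ) := by
      rw [hψ t ht, e3]
      field_simp
    -- derivative
    have hd1 : HasDerivAt (fun s : ℝ => s ^ α) (α * t ^ (α - 1)) t :=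
      Real.hasDerivAt_rpow_const (Or.inl htne)
    have hd3 : HasDerivAt (fun s : ℝ => Real.exp (a * s ^ α))
        (Real.exp (a * t ^ α) * (a * (α * t ^ (α - 1)))) t := (hd1.const_mul a).exp
    have hd4 : HasDerivAt (fun s : ℝ => 1 - b * s ^ α) (-(b * (α * t ^ (α - 1)))) t :=
      (hd1.const_mul b).const_sub 1
    have hd5 : HasDerivAt (fun s : ℝ => κ * Real.exp (a * s ^ α) * (1 - b * s ^ α))
        (κ * (Real.exp (a * t ^ α) * (a * (α * t ^ (α - 1)))) * (1 - b * t ^ α)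
          + κ * Real.exp (a * t ^ α) * -(b * (α * t ^ (α - 1)))) t :=
      (hd3.const_mul κ).mul hd4
    have hd6 : HasDerivAt (fun s : ℝ => s ^ ((n:ℝ) + 2 * κ - 1))
        (((n:ℝ) + 2 * κ - 1) * t ^ ((n:ℝ) + 2 * κ - 1 - 1)) t :=
      Real.hasDerivAt_rpow_const (Or.inl htne)
    have hPne : t ^ ((n:ℝ) + 2 * κ - 1) ≠ 0 := (Real.rpow_pos_of_pos ht _).ne'
    have hd7 := hd5.div hd6 hPne
    have heq : ψ =ᶠ[nhds t]
        (fun s : ℝ => κ * Real.exp (a * s ^ α) * (1 - b * s ^ α) / s ^ ((n:ℝ) + 2 * κ - 1)) := by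
      filter_upwards [isOpen_Ioi.mem_nhds (show t ∈ Set.Ioi (0:ℝ) from ht)] with s hs
      exact hψ s hs
    have hderiv : deriv ψ t
        = κ * Real.exp (a * t ^ α) / t ^ ((n:ℝ) + 2 * κ)
          * (a * α * t ^ α * (1 - b * t ^ α) - b * α * t ^ α
             - ((n:ℝ) + 2 * κ - 1) * (1 - b * t ^ α)) := by
      rw [heq.deriv_eq, (show HasDerivAt (fun s : ℝ => κ * Real.exp (a * s ^ α) * (1 - b * s ^ α) / s ^ ((n:ℝ) + 2 * κ - 1)) _ t from hd7).deriv]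
      have e5 : t ^ ((n:ℝ) + 2 * κ - 1 - 1) = t ^ ((n:ℝ) + 2 * κ) / t / t := by
        rw [Real.rpow_sub ht, Real.rpow_one, e3]
      rw [e3, e4, e5]
      field_simp
      ring
    rw [hψt, hderiv, e1, e2, ha, hb]
    have hPne' : t ^ ((n:ℝ) + 2 * κ) ≠ 0 := hP.ne'
    field_simp
    ring
  have key' : ∀ t, 0 < t →
      ((0 ≤ -(Real.exp (a * t ^ α) / t ^ ((n:ℝ) + 2 * κ - 2)) *
            (κ ^ 2 * Real.exp (a * t ^ α) * t ^ (-(n:ℝ) - 2 * κ) + deriv ψ t +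
              ((n:ℝ) - 1) * ψ t / t) - ψ t ^ 2) ↔
      0 ≤ 2 * α ^ 2 - M * ((n:ℝ) + 2 * κ) * (((n:ℝ) + 2 * κ) * (κ - α) + 2 * α) * t ^ α) := by
    intro t ht
    rw [key t ht]
    have hC : (0:ℝ) < κ * M / α ^ 2 * (Real.exp (a * t ^ α)) ^ 2 * t ^ α * t ^ 2
          / (t ^ ((n:ℝ) + 2 * κ)) ^ 2 := by
      have hu : (0:ℝ) < t ^ α := Real.rpow_pos_of_pos ht α
      have hP : (0:ℝ) < t ^ ((n:ℝ) + 2 * κ) := Real.rpow_pos_of_pos ht _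
      positivity
    exact mul_nonneg_iff_of_pos_left hC
  constructor
  · set c : ℝ := M * ((n:ℝ) + 2 * κ) * (((n:ℝ) + 2 * κ) * (κ - α) + 2 * α) with hc
    have hc0 : 0 < c := by
      have : (0:ℝ) < κ - α := by linarith
      have : (0:ℝ) < ((n:ℝ) + 2 * κ) * (κ - α) + 2 * α := by positivity
      positivity
    refine ⟨(2 * α ^ 2 / c) ^ (α⁻¹), by positivity, ?_⟩
    intro t ht htlt
    rw [key' t ht]
    have h1 : t ^ α < ((2 * α ^ 2 / c) ^ (α⁻¹)) ^ α := Real.rpow_lt_rpow ht.le htlt hα0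
    rw [Real.rpow_inv_rpow (by positivity) hαne] at h1
    rw [div_eq_mul_inv] at h1
    have := (mul_lt_mul_iff_left₀ hc0).mpr h1
    have h2 : c * t ^ α < 2 * α ^ 2 := by
      calc c * t ^ α < c * (2 * α ^ 2 * c⁻¹) := by
            exact (mul_lt_mul_iff_right₀ hc0).mpr h1
        _ = 2 * α ^ 2 := by field_simp
    linarith
  · intro t ht
    exact key' t ht
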